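/- Fix m, n ∈ ℕ. The total number of diagonally 2-colored Delannoy paths from (0,0) to (m,n) equals ∑_{r=0}^{min(m,n)} 2^r · C(m+n-r, m) · C(m, r), where C(·,·) denotes the binomial coefficient. Concretely: the number of finite lists of steps, each step being one of R (displacement (1,0)), U (displacement (0,1)), D₁ (displacement (1,1)), or D₂ (displacement (1,1)), whose displacements sum to (m,n), equals ∑_{r=0}^{min(m,n)} 2^r · C(m+n-r, m) · C(m, r). -/

import Mathlib

/-- A step of a diagonally 2-colored Delannoy path: right, up, or a diagonal step in one
of two colors. -/
inductive DStep : Type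
  | R : DStep
  | U : DStep
  | D1 : DStep
  | D2 : DStep
deriving DecidableEq

/-- The displacement of a step. -/
def DStep.disp : DStep → ℕ × ℕ
  | .R => (1, 0)
  | .U => (0, 1)
  | .D1 => (1, 1)
  | .D2 => (1, 1)

instance : Fintype DStep := ⟨{.R, .U, .D1, .D2}, by intro x; cases x <;> simp⟩

def DSet (m n : ℕ) : Set (List DStep) := {l | (l.map DStep.disp).sum = (m, n)}

lemma length_le_sum (l : List DStep) :
    l.length ≤ ((l.map DStep.disp).sum).1 + ((l.map DStep.disp).sum).2 := by
  induction l with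
  | nil => simp
  | cons s t ih =>
    simp only [List.map_cons, List.sum_cons, List.length_cons, Prod.fst_add, Prod.snd_add]
    have : 1 ≤ s.disp.1 + s.disp.2 := by cases s <;> simp [DStep.disp]
    omega

lemma DSet_finite (m n : ℕ) : (DSet m n).Finite := by
  apply (List.finite_length_le DStep (m + n)).subset
  intro l hl
  have := length_le_sum l
  simp only [DSet, Set.mem_setOf_eq] at hl
  rw [hl] at this
  simpa using this

lemma all_U (l : List DStep) (h : ((l.map DStep.disp).sum).1 = 0) :
    ∀ s ∈ l, s = DStep.U := by
  induction l with
  | nil => simp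
  | cons s t ih =>
    simp only [List.map_cons, List.sum_cons, Prod.fst_add] at h
    have hs : s.disp.1 = 0 := by omega
    have ht := ih (by omega)
    intro x hx
    rcases List.mem_cons.1 hx with rfl | hx
    · cases x <;> simp [DStep.disp] at hs ⊢
    · exact ht x hx

lemma all_R (l : List DStep) (h : ((l.map DStep.disp).sum).2 = 0) :
    ∀ s ∈ l, s = DStep.R := by
  induction l with
  | nil => simp
  | cons s t ih =>
    simp only [List.map_cons, List.sum_cons, Prod.snd_add] at h
    have hs : s.disp.2 = 0 := by omega
    have ht := ih (by omega)
    intro x hx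
    rcases List.mem_cons.1 hx with rfl | hx
    · cases x <;> simp [DStep.disp] at hs ⊢
    · exact ht x hx

lemma sum_replicate_U (n : ℕ) :
    ((List.replicate n DStep.U).map DStep.disp).sum = (0, n) := by
  induction n with
  | zero => simp; rfl
  | succ k ih => simp [List.replicate_succ, ih, DStep.disp, Prod.ext_iff, Nat.add_comm]

lemma sum_replicate_R (m : ℕ) :
    ((List.replicate m DStep.R).map DStep.disp).sum = (m, 0) := by
  induction m with
  | zero => simp; rfl
  | succ k ih => simp [List.replicate_succ, ih, DStep.disp, Prod.ext_iff, Nat.add_comm]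

lemma DSet_zero_left (n : ℕ) : DSet 0 n = {List.replicate n DStep.U} := by
  ext l
  simp only [DSet, Set.mem_setOf_eq, Set.mem_singleton_iff]
  constructor
  · intro hl
    have h1 : ((l.map DStep.disp).sum).1 = 0 := by rw [hl]
    have hrep := List.eq_replicate_of_mem (all_U l h1)
    have hlen : l.length = n := by
      have := congrArg (fun t => (t.map DStep.disp).sum) hrep
      rw [hl, sum_replicate_U] at this
      have := congrArg Prod.snd this
      simpa using this.symm
    rw [hrep, hlen]
  · rintro rfl
    exact sum_replicate_U n

lemma DSet_zero_right (m : ℕ) : DSet m 0 = {List.replicate m DStep.R} := by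
  ext l
  simp only [DSet, Set.mem_setOf_eq, Set.mem_singleton_iff]
  constructor
  · intro hl
    have h1 : ((l.map DStep.disp).sum).2 = 0 := by rw [hl]
    have hrep := List.eq_replicate_of_mem (all_R l h1)
    have hlen : l.length = m := by
      have := congrArg (fun t => (t.map DStep.disp).sum) hrep
      rw [hl, sum_replicate_R] at this
      have := congrArg Prod.fst this
      simpa using this.symm
    rw [hrep, hlen]
  · rintro rfl
    exact sum_replicate_R m

lemma DSet_succ_succ (m n : ℕ) :
    DSet (m + 1) (n + 1) =
      (List.cons DStep.R) '' DSet m (n + 1) ∪ (List.cons DStep.U) '' DSet (m + 1) n ∪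
        (List.cons DStep.D1) '' DSet m n ∪ (List.cons DStep.D2) '' DSet m n := by
  ext l
  simp only [DSet, Set.mem_setOf_eq, Set.mem_union, Set.mem_image]
  constructor
  · intro h
    cases l with
    | nil => simp [Prod.ext_iff] at h
    | cons s t =>
      simp only [List.map_cons, List.sum_cons] at h
      have h1 := congrArg Prod.fst h
      have h2 := congrArg Prod.snd h
      simp only [Prod.fst_add, Prod.snd_add] at h1 h2
      cases s
      · exact .inl (.inl (.inl ⟨t, by
          simp only [DStep.disp] at h1 h2; exact Prod.ext (by omega) (by omega), rfl⟩))
      · exact .inl (.inl (.inr ⟨t, by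
          simp only [DStep.disp] at h1 h2; exact Prod.ext (by omega) (by omega), rfl⟩))
      · exact .inl (.inr ⟨t, by
          simp only [DStep.disp] at h1 h2; exact Prod.ext (by omega) (by omega), rfl⟩)
      · exact .inr ⟨t, by
          simp only [DStep.disp] at h1 h2; exact Prod.ext (by omega) (by omega), rfl⟩
  · rintro (((⟨t, ht, rfl⟩ | ⟨t, ht, rfl⟩) | ⟨t, ht, rfl⟩) | ⟨t, ht, rfl⟩) <;>
      simp [DStep.disp, ht, Prod.ext_iff] <;> omega

lemma cons_image_disjoint {a b : DStep} (hab : a ≠ b) (s t : Set (List DStep)) :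
    Disjoint (List.cons a '' s) (List.cons b '' t) := by
  rw [Set.disjoint_left]
  rintro l ⟨x, -, rfl⟩ ⟨y, -, hy⟩
  simp only [List.cons.injEq] at hy
  exact hab hy.1.symm

lemma DSet_card_succ_succ (m n : ℕ) :
    (DSet (m + 1) (n + 1)).ncard =
      (DSet m (n + 1)).ncard + (DSet (m + 1) n).ncard + 2 * (DSet m n).ncard := by
  have fA : (List.cons DStep.R '' DSet m (n + 1)).Finite := (DSet_finite _ _).image _
  have fB : (List.cons DStep.U '' DSet (m + 1) n).Finite := (DSet_finite _ _).image _
  have fC : (List.cons DStep.D1 '' DSet m n).Finite := (DSet_finite _ _).image _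
  have fD : (List.cons DStep.D2 '' DSet m n).Finite := (DSet_finite _ _).image _
  rw [DSet_succ_succ,
    Set.ncard_union_eq (by
      refine Disjoint.union_left (Disjoint.union_left ?_ ?_) ?_ <;>
        exact cons_image_disjoint (by simp) _ _) ((fA.union fB).union fC) fD,
    Set.ncard_union_eq (by
      refine Disjoint.union_left ?_ ?_ <;> exact cons_image_disjoint (by simp) _ _)
      (fA.union fB) fC,
    Set.ncard_union_eq (cons_image_disjoint (by simp) _ _) fA fB,
    Set.ncard_image_of_injective _ List.cons_injective,
    Set.ncard_image_of_injective _ List.cons_injective,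
    Set.ncard_image_of_injective _ List.cons_injective,
    Set.ncard_image_of_injective _ List.cons_injective]
  ring

lemma DSet_card_zero_left (n : ℕ) : (DSet 0 n).ncard = 1 := by
  rw [DSet_zero_left]; exact Set.ncard_singleton _

lemma DSet_card_zero_right (m : ℕ) : (DSet m 0).ncard = 1 := by
  rw [DSet_zero_right]; exact Set.ncard_singleton _

def Fd (m n : ℕ) : ℕ := ∑ r ∈ Finset.range (m + 1), 2 ^ r * (m + n - r).choose m * m.choose r

lemma sum_min_eq (m n : ℕ) :
    ∑ r ∈ Finset.range (min m n + 1), 2 ^ r * (m + n - r).choose m * m.choose r = Fd m n := by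
  rcases le_or_gt m n with h | h
  · rw [min_eq_left h, Fd]
  · rw [min_eq_right h.le, Fd]
    apply Finset.sum_subset (Finset.range_subset_range.mpr (by omega))
    intro r hr hnr
    rw [Finset.mem_range] at hr hnr
    have : (m + n - r).choose m = 0 := Nat.choose_eq_zero_of_lt (by omega)
    rw [this]
    ring

lemma Fd_zero_left (n : ℕ) : Fd 0 n = 1 := by simp [Fd]

lemma Fd_zero_right (m : ℕ) : Fd m 0 = 1 := by
  rw [Fd, show m + 1 = m + 1 from rfl, Finset.sum_range_succ']
  have h1 : ∑ s ∈ Finset.range m, 2 ^ (s+1) * (m + 0 - (s+1)).choose m * m.choose (s+1) = 0 := by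
    apply Finset.sum_eq_zero
    intro s hs
    rw [Finset.mem_range] at hs
    rw [Nat.choose_eq_zero_of_lt (show m + 0 - (s+1) < m by omega)]
    ring
  rw [h1]
  simp

lemma Fd_rec (m n : ℕ) :
    Fd (m + 1) (n + 1) = Fd m (n + 1) + Fd (m + 1) n + 2 * Fd m n := by
  have hA : Fd (m + 1) (n + 1) =
      (∑ r ∈ Finset.range (m + 2), 2 ^ r * (m + 1 + n - r).choose m * (m + 1).choose r)
        + Fd (m + 1) n := by
    rw [Fd, Fd, ← Finset.sum_add_distrib]
    apply Finset.sum_congr rfl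
    intro r hr
    rw [Finset.mem_range] at hr
    rw [show m + 1 + (n + 1) - r = (m + 1 + n - r) + 1 from by omega, Nat.choose_succ_succ]
    ring
  have hB : (∑ r ∈ Finset.range (m + 2), 2 ^ r * (m + 1 + n - r).choose m * (m + 1).choose r)
      = Fd m (n + 1) + 2 * Fd m n := by
    rw [show m + 2 = m + 1 + 1 from rfl, Finset.sum_range_succ']
    have h1 : ∀ s ∈ Finset.range (m + 1),
        2 ^ (s + 1) * (m + 1 + n - (s + 1)).choose m * (m + 1).choose (s + 1)
          = 2 ^ (s + 1) * (m + n - s).choose m * m.choose (s + 1)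
            + 2 * (2 ^ s * (m + n - s).choose m * m.choose s) := by
      intro s hs
      rw [show m + 1 + n - (s + 1) = m + n - s from by omega, Nat.choose_succ_succ, pow_succ]
      ring
    rw [Finset.sum_congr rfl h1, Finset.sum_add_distrib, ← Finset.mul_sum]
    have h2 : ∑ s ∈ Finset.range (m + 1), 2 ^ (s + 1) * (m + n - s).choose m * m.choose (s + 1)
        = ∑ s ∈ Finset.range m, 2 ^ (s + 1) * (m + n - s).choose m * m.choose (s + 1) := by
      rw [Finset.sum_range_succ, Nat.choose_succ_self]
      simp
    have h3 : Fd m (n + 1)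
        = (∑ s ∈ Finset.range m, 2 ^ (s + 1) * (m + n - s).choose m * m.choose (s + 1))
          + (m + n + 1).choose m := by
      rw [Fd, Finset.sum_range_succ']
      congr 1
      · apply Finset.sum_congr rfl
        intro s hs
        rw [show m + (n + 1) - (s + 1) = m + n - s from by omega]
      · simp [show m + (n + 1) - 0 = m + n + 1 from by omega]
    rw [h2, h3, Fd]
    simp [show m + 1 + n - 0 = m + n + 1 from by omega]
    ring
  rw [hA, hB]
  ring

lemma DSet_card (m n : ℕ) : (DSet m n).ncard = Fd m n := by
  induction m generalizing n with
  | zero => rw [DSet_card_zero_left, Fd_zero_left]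
  | succ m ihm =>
    induction n with
    | zero => rw [DSet_card_zero_right, Fd_zero_right]
    | succ n ihn => rw [DSet_card_succ_succ, Fd_rec, ihm (n + 1), ihm n, ihn]

/-- The total number of diagonally 2-colored Delannoy paths from `(0,0)` to `(m,n)` is
`∑_{r=0}^{min(m,n)} 2^r · C(m+n-r, m) · C(m, r)`. -/
theorem stmt14 (m n : ℕ) :
    {l : List DStep | (l.map DStep.disp).sum = (m, n)}.ncard
      = ∑ r ∈ Finset.range (min m n + 1), 2 ^ r * (m + n - r).choose m * m.choose r := by
  rw [sum_min_eq, ← DSet_card]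
  rfl
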